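/- Let K, q, r be positive integers, let H₀ be a 2K×q real matrix with rank(H₀) ≤ r, and let A > 0 and ε > 0 be reals. Then there exists a finite set S of 2K×q real matrices with card(S) ≤ (8A/ε + 2)^{2Kr} · (8√r(‖H₀‖ + A + ε)/ε + 2)^{qr} such that for every 2K×q real matrix H with rank(H) ≤ r and ‖H − H₀‖ ≤ A, there exists H' ∈ S with ‖H − H'‖ ≤ ε. -/

import Mathlib

set_option maxHeartbeats 1000000

open Matrix

/-- Frobenius norm of a real matrix. -/
noncomputable def frobNorm {m n : ℕ} (M : Matrix (Fin m) (Fin n) ℝ) : ℝ :=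
  Real.sqrt (∑ i, ∑ j, (M i j) ^ 2)

section CoveringAux
open MeasureTheory Metric Finset Matrix
open scoped ENNReal


lemma sep_card_bound {ι : Type*} [Fintype ι] (x : EuclideanSpace ℝ ι) {R δ : ℝ} (hR : 0 ≤ R) (hδ : 0 < δ)
    (T : Finset (EuclideanSpace ℝ ι)) (hT : ∀ t ∈ T, dist t x ≤ R)
    (hsep : ∀ s ∈ T, ∀ t ∈ T, s ≠ t → δ < dist s t) :
    (T.card : ℝ) ≤ (2 * R / δ + 1) ^ (Fintype.card ι) := by
  set v := volume (ball (0 : EuclideanSpace ℝ ι) 1) with hv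
  have hv0 : v ≠ 0 := (measure_ball_pos _ _ one_pos).ne'
  have hvt : v ≠ ⊤ := measure_ball_lt_top.ne
  have hδ2 : (0:ℝ) < δ/2 := by linarith
  have hball : ∀ y : EuclideanSpace ℝ ι, volume (ball y (δ/2)) = ENNReal.ofReal ((δ/2) ^ (Fintype.card ι)) * v := by
    intro y; rw [Measure.addHaar_ball_of_pos _ _ hδ2, finrank_euclideanSpace]
  have hdisj : (T : Set (EuclideanSpace ℝ ι)).PairwiseDisjoint (fun t => ball t (δ/2)) := by
    intro s hs t ht hst
    apply ball_disjoint_ball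
    calc δ/2 + δ/2 = δ := by ring
    _ ≤ dist s t := (hsep s hs t ht hst).le
  have hsub : (⋃ t ∈ T, ball t (δ/2)) ⊆ ball x (R + δ/2) := by
    intro y hy
    simp only [Set.mem_iUnion] at hy
    obtain ⟨t, ht, hyt⟩ := hy
    have h2 := hT t ht
    simp only [mem_ball] at *
    calc dist y x ≤ dist y t + dist t x := dist_triangle _ _ _
    _ < δ/2 + R := by linarith [hyt]
    _ = R + δ/2 := by ring
  have hmeas : volume (⋃ t ∈ T, ball t (δ/2)) = T.card * (ENNReal.ofReal ((δ/2)^(Fintype.card ι)) * v) := by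
    rw [measure_biUnion_finset hdisj (fun t _ => measurableSet_ball)]
    simp only [hball, Finset.sum_const, nsmul_eq_mul]
  have hub : volume (ball x (R + δ/2)) = ENNReal.ofReal ((R + δ/2)^(Fintype.card ι)) * v := by
    rw [Measure.addHaar_ball_of_pos _ _ (by linarith : (0:ℝ) < R + δ/2), finrank_euclideanSpace]
  have key : (T.card : ℝ≥0∞) * ENNReal.ofReal ((δ/2)^(Fintype.card ι)) ≤ ENNReal.ofReal ((R + δ/2)^(Fintype.card ι)) := by
    have h1 : (T.card : ℝ≥0∞) * ENNReal.ofReal ((δ/2)^(Fintype.card ι)) * v ≤ ENNReal.ofReal ((R + δ/2)^(Fintype.card ι)) * v := by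
      rw [mul_assoc, ← hmeas, ← hub]; exact measure_mono hsub
    exact (ENNReal.mul_le_mul_iff_left hv0 hvt).mp h1
  -- to reals
  have hδn : (0:ℝ) < (δ/2)^(Fintype.card ι) := pow_pos hδ2 _
  have key2 : (T.card : ℝ) * (δ/2)^(Fintype.card ι) ≤ (R + δ/2)^(Fintype.card ι) := by
    have h2 := ENNReal.toReal_mono (ENNReal.ofReal_ne_top) key
    simpa [ENNReal.toReal_mul, ENNReal.toReal_ofReal hδn.le,
      ENNReal.toReal_ofReal (show (0:ℝ) ≤ (R + δ/2)^(Fintype.card ι) by positivity)] using h2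
  have hfrac : (T.card : ℝ) ≤ ((R + δ/2)/(δ/2))^(Fintype.card ι) := by
    rw [div_pow]
    rw [le_div_iff₀ hδn]
    exact key2
  have heq : (R + δ/2)/(δ/2) = 2*R/δ + 1 := by field_simp
  rwa [heq] at hfrac

lemma euclidean_net {ι : Type*} [Fintype ι] (x : EuclideanSpace ℝ ι) {R δ : ℝ} (hR : 0 ≤ R) (hδ : 0 < δ) :
    ∃ T : Finset (EuclideanSpace ℝ ι),
      (T.card : ℝ) ≤ (2 * R / δ + 1) ^ (Fintype.card ι) ∧
      ∀ y : EuclideanSpace ℝ ι, dist y x ≤ R → ∃ t ∈ T, dist y t ≤ δ := by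
  classical
  set P : ℕ → Prop := fun k => ∃ T : Finset (EuclideanSpace ℝ ι),
    T.card = k ∧ (∀ t ∈ T, dist t x ≤ R) ∧ (∀ s ∈ T, ∀ t ∈ T, s ≠ t → δ < dist s t) with hP
  have hP0 : P 0 := ⟨∅, by simp⟩
  set N : ℕ := Nat.floor ((2 * R / δ + 1) ^ (Fintype.card ι)) with hN
  have hPle : ∀ k, P k → k ≤ N := by
    intro k ⟨T, hcard, hT, hsep⟩
    have := sep_card_bound x hR hδ T hT hsep
    rw [hcard] at this
    exact Nat.le_floor this
  set k₀ := Nat.findGreatest P N with hk₀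
  have hPk₀ : P k₀ := Nat.findGreatest_spec (Nat.zero_le N) hP0
  obtain ⟨T, hcard, hT, hsep⟩ := hPk₀
  refine ⟨T, ?_, ?_⟩
  · have h1 : (T.card : ℝ) ≤ (2 * R / δ + 1) ^ (Fintype.card ι) := sep_card_bound x hR hδ T hT hsep
    exact h1
  · intro y hy
    by_contra hcon
    push_neg at hcon
    have hyT : y ∉ T := fun h => by
      have h2 := hcon y h
      simp at h2
      linarith
    have hP' : P (k₀ + 1) := by
      refine ⟨insert y T, by rw [Finset.card_insert_of_notMem hyT, hcard], ?_, ?_⟩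
      · intro t ht
        rcases Finset.mem_insert.mp ht with rfl | ht'
        · exact hy
        · exact hT t ht'
      · intro s hs t ht hst
        rcases Finset.mem_insert.mp hs with rfl | hs' <;>
          rcases Finset.mem_insert.mp ht with rfl | ht'
        · exact absurd rfl hst
        · exact hcon t ht'
        · rw [dist_comm]; exact hcon s hs'
        · exact hsep s hs' t ht' hst
    have : k₀ + 1 ≤ N := hPle _ hP'
    exact absurd hP' (Nat.findGreatest_is_greatest (Nat.lt_succ_self k₀) this)

def matToEuc {m n : ℕ} (M : Matrix (Fin m) (Fin n) ℝ) : EuclideanSpace ℝ (Fin m × Fin n) :=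
  WithLp.toLp 2 (fun p : Fin m × Fin n => M p.1 p.2)

def eucToMat {m n : ℕ} (f : EuclideanSpace ℝ (Fin m × Fin n)) : Matrix (Fin m) (Fin n) ℝ :=
  Matrix.of fun i j => f (i, j)

lemma dist_matToEuc {m n : ℕ} (M N : Matrix (Fin m) (Fin n) ℝ) :
    dist (matToEuc M) (matToEuc N) = frobNorm (M - N) := by
  rw [EuclideanSpace.dist_eq, frobNorm]
  congr 1
  rw [Fintype.sum_prod_type]
  apply Finset.sum_congr rfl
  intro i _
  apply Finset.sum_congr rfl
  intro j _
  rw [Real.dist_eq, sq_abs]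
  rfl

lemma matrix_net {m n : ℕ} (X₀ : Matrix (Fin m) (Fin n) ℝ) {R δ : ℝ} (hR : 0 ≤ R) (hδ : 0 < δ) :
    ∃ S : Finset (Matrix (Fin m) (Fin n) ℝ),
      (S.card : ℝ) ≤ (2 * R / δ + 1) ^ (m * n) ∧
      ∀ X : Matrix (Fin m) (Fin n) ℝ, frobNorm (X - X₀) ≤ R → ∃ X' ∈ S, frobNorm (X - X') ≤ δ := by
  classical
  obtain ⟨T, hcard, hnet⟩ := euclidean_net (matToEuc X₀) hR hδ
  refine ⟨T.image eucToMat, ?_, ?_⟩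
  · refine le_trans (Nat.cast_le.mpr (Finset.card_image_le)) ?_
    simpa [Fintype.card_prod] using hcard
  · intro X hX
    have hX' : dist (matToEuc X) (matToEuc X₀) ≤ R := by rwa [dist_matToEuc]
    obtain ⟨t, htT, hdist⟩ := hnet (matToEuc X) hX'
    refine ⟨eucToMat t, Finset.mem_image_of_mem _ htT, ?_⟩
    have : matToEuc (eucToMat t) = t := rfl
    rw [← this] at hdist
    rwa [dist_matToEuc] at hdist

-- norm of a Euclidean vector via squares
lemma euc_norm_eq {ι : Type*} [Fintype ι] (w : EuclideanSpace ℝ ι) :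
    ‖w‖ = Real.sqrt (∑ i, (w i)^2) := by
  rw [EuclideanSpace.norm_eq]
  congr 1
  exact Finset.sum_congr rfl fun i _ => by rw [Real.norm_eq_abs, sq_abs]

lemma frobNorm_eq_norm {m n : ℕ} (M : Matrix (Fin m) (Fin n) ℝ) :
    frobNorm M = ‖matToEuc M‖ := by
  rw [euc_norm_eq, frobNorm, Fintype.sum_prod_type]
  rfl

lemma frobNorm_nonneg {m n : ℕ} (M : Matrix (Fin m) (Fin n) ℝ) : 0 ≤ frobNorm M :=
  Real.sqrt_nonneg _

lemma matToEuc_add {m n : ℕ} (M N : Matrix (Fin m) (Fin n) ℝ) :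
    matToEuc (M + N) = matToEuc M + matToEuc N := rfl

lemma frobNorm_triangle {m n : ℕ} (M N : Matrix (Fin m) (Fin n) ℝ) :
    frobNorm (M + N) ≤ frobNorm M + frobNorm N := by
  rw [frobNorm_eq_norm, frobNorm_eq_norm, frobNorm_eq_norm, matToEuc_add]
  exact norm_add_le _ _

/-- `vᵀ Y` as a Euclidean vector. -/
def vecMulE {a b : ℕ} (Y : Matrix (Fin a) (Fin b) ℝ) (v : EuclideanSpace ℝ (Fin a)) :
    EuclideanSpace ℝ (Fin b) := WithLp.toLp 2 (fun j => ∑ k, v k * Y k j)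

/-- operator norm bound -/
def OpBnd {a b : ℕ} (Y : Matrix (Fin a) (Fin b) ℝ) (c : ℝ) : Prop :=
  ∀ v : EuclideanSpace ℝ (Fin a), ‖vecMulE Y v‖ ≤ c * ‖v‖

lemma opBnd_add {a b : ℕ} {Y Z : Matrix (Fin a) (Fin b) ℝ} {c d : ℝ}
    (hY : OpBnd Y c) (hZ : OpBnd Z d) : OpBnd (Y + Z) (c + d) := by
  intro v
  have h : vecMulE (Y + Z) v = vecMulE Y v + vecMulE Z v := by
    ext j
    simp [vecMulE, Matrix.add_apply, mul_add, Finset.sum_add_distrib]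
  rw [h]
  calc ‖vecMulE Y v + vecMulE Z v‖ ≤ ‖vecMulE Y v‖ + ‖vecMulE Z v‖ := norm_add_le _ _
  _ ≤ c * ‖v‖ + d * ‖v‖ := add_le_add (hY v) (hZ v)
  _ = (c + d) * ‖v‖ := by ring

lemma opBnd_frob {a b : ℕ} (Y : Matrix (Fin a) (Fin b) ℝ) : OpBnd Y (frobNorm Y) := by
  intro v
  rw [euc_norm_eq, euc_norm_eq, frobNorm]
  rw [← Real.sqrt_mul (by positivity)]
  apply Real.sqrt_le_sqrt
  calc ∑ j, (vecMulE Y v j)^2 = ∑ j, (∑ k, v k * Y k j)^2 := rfl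
  _ ≤ ∑ j, (∑ k, (v k)^2) * (∑ k, (Y k j)^2) := by
      apply Finset.sum_le_sum
      intro j _
      exact Finset.sum_mul_sq_le_sq_mul_sq _ _ _
  _ = (∑ k, ∑ j, (Y k j)^2) * ∑ k, (v k)^2 := by
      rw [← Finset.mul_sum, Finset.sum_comm]
      ring

lemma frob_mul_le {a b c : ℕ} (X : Matrix (Fin a) (Fin b) ℝ) (Y : Matrix (Fin b) (Fin c) ℝ)
    {t : ℝ} (hY : OpBnd Y t) (ht : 0 ≤ t) :
    frobNorm (X * Y) ≤ t * frobNorm X := by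
  rw [frobNorm, frobNorm, ← Real.sqrt_sq ht, ← Real.sqrt_mul (by positivity)]
  apply Real.sqrt_le_sqrt
  have hrow : ∀ i, ∑ j, ((X * Y) i j)^2 ≤ t^2 * ∑ k, (X i k)^2 := by
    intro i
    have h1 := hY (WithLp.toLp 2 (fun k => X i k))
    rw [euc_norm_eq, euc_norm_eq] at h1
    have h2 : Real.sqrt (∑ j, (vecMulE Y (WithLp.toLp 2 (fun k => X i k)) j)^2) ^ 2 ≤
        (t * Real.sqrt (∑ k, ((WithLp.toLp 2 (fun k => X i k) : EuclideanSpace ℝ (Fin b)) k)^2))^2 := by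
      apply pow_le_pow_left₀ (Real.sqrt_nonneg _) h1
    rw [Real.sq_sqrt (by positivity), mul_pow, Real.sq_sqrt (by positivity)] at h2
    calc ∑ j, ((X * Y) i j)^2 = ∑ j, (vecMulE Y (WithLp.toLp 2 (fun k => X i k)) j)^2 := by
          apply Finset.sum_congr rfl
          intro j _
          simp [Matrix.mul_apply, vecMulE]
    _ ≤ t^2 * ∑ k, (X i k)^2 := h2
  calc ∑ i, ∑ j, ((X * Y) i j)^2 ≤ ∑ i, t^2 * ∑ k, (X i k)^2 := Finset.sum_le_sum fun i _ => hrow i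
  _ = t^2 * ∑ i, ∑ k, (X i k)^2 := by rw [Finset.mul_sum]

/-- columns of a matrix as Euclidean vectors -/
def colE {a b : ℕ} (C : Matrix (Fin a) (Fin b) ℝ) (k : Fin b) : EuclideanSpace ℝ (Fin a) :=
  WithLp.toLp 2 (fun j => C j k)

-- orthonormal columns ⇒ OpBnd C 1 (Bessel)
lemma opBnd_orth {a b : ℕ} (C : Matrix (Fin a) (Fin b) ℝ) (hC : Orthonormal ℝ (colE C)) :
    OpBnd C 1 := by
  intro v
  rw [one_mul, euc_norm_eq]
  have bessel := hC.sum_inner_products_le (s := Finset.univ) v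
  have h1 : ∀ j : Fin b, vecMulE C v j = inner ℝ (colE C j) v := by
    intro j
    simp [vecMulE, colE, PiLp.inner_apply, RCLike.inner_apply]
  have h2 : ∑ j, (vecMulE C v j)^2 ≤ ‖v‖^2 := by
    calc ∑ j, (vecMulE C v j)^2 = ∑ j, ‖(inner ℝ (colE C j) v : ℝ)‖^2 := by
          apply Finset.sum_congr rfl
          intro j _
          rw [h1 j, Real.norm_eq_abs, sq_abs]
    _ ≤ ‖v‖^2 := bessel
  calc Real.sqrt (∑ j, (vecMulE C v j)^2) ≤ Real.sqrt (‖v‖^2) := Real.sqrt_le_sqrt h2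
  _ = ‖v‖ := Real.sqrt_sq (norm_nonneg v)

-- orthonormal columns ⇒ OpBnd Cᵀ 1 (Pythagoras)
lemma opBnd_orth_transpose {a b : ℕ} (C : Matrix (Fin a) (Fin b) ℝ)
    (hC : Orthonormal ℝ (colE C)) : OpBnd Cᵀ 1 := by
  intro v
  rw [one_mul]
  have h1 : vecMulE Cᵀ v = ∑ k, v k • colE C k := by
    ext j
    rw [show (∑ k, v k • colE C k) j = ∑ k, v k * C j k from by
      induction (Finset.univ : Finset (Fin b)) using Finset.induction_on with
      | empty => rfl
      | insert _ _ h ih => rw [Finset.sum_insert h, Finset.sum_insert h, ← ih]; rfl]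
    simp [vecMulE, Matrix.transpose_apply]
  rw [h1]
  have h2 : ‖∑ k, v k • colE C k‖^2 = ‖v‖^2 := by
    rw [← real_inner_self_eq_norm_sq]
    rw [hC.inner_sum v v Finset.univ]
    rw [← real_inner_self_eq_norm_sq, PiLp.inner_apply]
    simp [RCLike.inner_apply, pow_two]
  have h3 := congrArg Real.sqrt h2
  rw [Real.sqrt_sq (norm_nonneg _), Real.sqrt_sq (norm_nonneg _)] at h3
  exact h3.le

lemma euc_sum_apply {ι α : Type*} [DecidableEq α] (t : Finset α) (g : α → EuclideanSpace ℝ ι)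
    (j : ι) : (∑ k ∈ t, g k) j = ∑ k ∈ t, g k j := by
  induction t using Finset.induction_on with
  | empty => rfl
  | insert _ _ h ih => rw [Finset.sum_insert h, Finset.sum_insert h, ← ih]; rfl

lemma frob_orth_cols {a b : ℕ} (C : Matrix (Fin a) (Fin b) ℝ) (hC : Orthonormal ℝ (colE C)) :
    frobNorm C = Real.sqrt b := by
  rw [frobNorm]
  congr 1
  rw [Finset.sum_comm]
  have h1 : ∀ k : Fin b, ∑ j, (C j k)^2 = 1 := by
    intro k
    have h2 : ‖colE C k‖ = 1 := hC.1 k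
    rw [euc_norm_eq] at h2
    have h3 := congrArg (· ^ 2) h2
    simpa [colE] using Real.sqrt_eq_one.mp h2
  simp [h1]

lemma exists_factorization {m q r' : ℕ} (hr'q : r' ≤ q) (H : Matrix (Fin m) (Fin q) ℝ)
    (hrank : Module.finrank ℝ (Submodule.span ℝ (Set.range H)) ≤ r') :
    ∃ C : Matrix (Fin q) (Fin r') ℝ, Orthonormal ℝ (colE C) ∧ H * C * Cᵀ = H := by
  classical
  set E := EuclideanSpace ℝ (Fin q)
  let e : (Fin q → ℝ) ≃ₗ[ℝ] E := (EuclideanSpace.equiv (Fin q) ℝ).symm.toLinearEquiv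
  set W' : Submodule ℝ (Fin q → ℝ) := Submodule.span ℝ (Set.range H) with hW'
  set W : Submodule ℝ E := W'.map e.toLinearMap with hW
  have hdim : Module.finrank ℝ W ≤ r' := by
    rw [hW]
    exact le_trans (le_of_eq (LinearEquiv.finrank_map_eq e W')) hrank
  set d := Module.finrank ℝ W with hd
  let b₀ : OrthonormalBasis (Fin d) ℝ W := stdOrthonormalBasis ℝ W
  set v : Fin q → E := fun i => if h : (i : ℕ) < d then (b₀ ⟨i, h⟩ : E) else 0 with hv
  set s : Set (Fin q) := {i | (i : ℕ) < d} with hs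
  have hortho : Orthonormal ℝ (s.restrict v) := by
    rw [orthonormal_iff_ite]
    intro i j
    have hi : ((i : Fin q) : ℕ) < d := i.2
    have hj : ((j : Fin q) : ℕ) < d := j.2
    show inner ℝ (v i) (v j) = _
    simp only [hv, dif_pos hi, dif_pos hj]
    rw [← Submodule.coe_inner]
    rw [orthonormal_iff_ite.mp b₀.orthonormal]
    by_cases hij : i = j
    · subst hij; simp
    · have h2 : (⟨(i:Fin q), hi⟩ : Fin d) ≠ ⟨(j:Fin q), hj⟩ := by
        intro hE
        apply hij
        apply Subtype.ext
        have := congrArg (Fin.val) hE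
        exact Fin.ext this
      simp [h2, hij]
  have hcard : Module.finrank ℝ E = Fintype.card (Fin q) := by
    simp [E, finrank_euclideanSpace]
  obtain ⟨b, hb⟩ := hortho.exists_orthonormalBasis_extension_of_card_eq hcard
  -- b i = b₀ ⟨i, _⟩ for i < d
  set C : Matrix (Fin q) (Fin r') ℝ := Matrix.of fun j k => b (Fin.castLE hr'q k) j with hC
  have hcol : ∀ k : Fin r', colE C k = b (Fin.castLE hr'q k) := fun k => rfl
  have horthC : Orthonormal ℝ (colE C) := by
    have h1 : colE C = b ∘ (Fin.castLE hr'q) := funext hcol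
    rw [h1]
    exact b.orthonormal.comp _ (Fin.castLE_injective hr'q)
  refine ⟨C, horthC, ?_⟩
  have hdr' : d ≤ r' := hdim
  -- W is contained in the span of the first d basis vectors
  have hWspan : W ≤ Submodule.span ℝ (Set.range (fun i : s => b i)) := by
    have h1 : Submodule.span ℝ (Set.range (fun k : Fin d => (b₀ k : E))) = W := by
      have h2 := b₀.toBasis.span_eq
      calc Submodule.span ℝ (Set.range (fun k : Fin d => (b₀ k : E)))
          = Submodule.map W.subtype (Submodule.span ℝ (Set.range b₀.toBasis)) := by
            rw [Submodule.map_span, ← Set.range_comp]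
            exact congrArg _ (congrArg _ (funext fun k => by
              simp [OrthonormalBasis.coe_toBasis]))
      _ = Submodule.map W.subtype ⊤ := by rw [h2]
      _ = W := Submodule.map_subtype_top W
    rw [← h1]
    apply Submodule.span_le.mpr
    rintro x ⟨k, rfl⟩
    apply Submodule.subset_span
    have hkq : (k : ℕ) < q := lt_of_lt_of_le k.2 (le_trans hdr' hr'q)
    refine ⟨⟨⟨(k : ℕ), hkq⟩, k.2⟩, ?_⟩
    show b ⟨(k : ℕ), hkq⟩ = _
    rw [hb ⟨(k : ℕ), hkq⟩ k.2]
    simp only [hv, dif_pos (show ((⟨(k : ℕ), hkq⟩ : Fin q) : ℕ) < d from k.2)]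
  -- inner products with later basis vectors vanish on W
  have horth0 : ∀ l : Fin q, ¬ ((l : ℕ) < d) →
      ∀ y ∈ Submodule.span ℝ (Set.range (fun i : s => b i)), (inner ℝ (b l) y : ℝ) = 0 := by
    intro l hl y hy
    induction hy using Submodule.span_induction with
    | mem z hz =>
        obtain ⟨i, rfl⟩ := hz
        show (inner ℝ (b l) (b (i : Fin q)) : ℝ) = 0
        rw [orthonormal_iff_ite.mp b.orthonormal]
        have hne : l ≠ (i : Fin q) := by
          intro hcon
          exact hl (hcon ▸ i.2)
        simp [hne]
    | zero => exact inner_zero_right _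
    | add y z _ _ hy hz => rw [inner_add_right, hy, hz, add_zero]
    | smul a y _ hy => rw [inner_smul_right, hy, mul_zero]
  -- rows of H lie in W
  have hrow : ∀ i : Fin m, (WithLp.toLp 2 (fun j => H i j) : EuclideanSpace ℝ (Fin q)) ∈ W := by
    intro i
    rw [hW]
    exact ⟨H i, Submodule.subset_span ⟨i, rfl⟩, rfl⟩
  ext i j
  set x : E := (WithLp.toLp 2 (fun j => H i j) : EuclideanSpace ℝ (Fin q)) with hx
  have hexp := b.sum_repr' x
  have hcoord : x j = ∑ l : Fin q, (inner ℝ (b l) x : ℝ) * (b l) j := by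
    conv_lhs => rw [← hexp]
    rw [euc_sum_apply]
    exact Finset.sum_congr rfl fun l _ => rfl
  have hzero : ∀ l : Fin q, ¬ ((l : ℕ) < r') → (inner ℝ (b l) x : ℝ) * (b l) j = 0 := by
    intro l hl
    rw [horth0 l (fun h => hl (lt_of_lt_of_le h hdr')) x (hWspan (hrow i)), zero_mul]
  have hsum : ∑ l : Fin q, (inner ℝ (b l) x : ℝ) * (b l) j
      = ∑ k : Fin r', (inner ℝ (b (Fin.castLE hr'q k)) x : ℝ) * (b (Fin.castLE hr'q k)) j := by
    calc ∑ l : Fin q, (inner ℝ (b l) x : ℝ) * (b l) j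
        = ∑ l ∈ Finset.univ.map (Fin.castLEEmb hr'q), (inner ℝ (b l) x : ℝ) * (b l) j := by
          symm
          apply Finset.sum_subset (Finset.subset_univ _)
          intro l _ hlnot
          apply hzero l
          intro hlt
          apply hlnot
          rw [Finset.mem_map]
          exact ⟨⟨(l : ℕ), hlt⟩, Finset.mem_univ _, Fin.ext rfl⟩
    _ = ∑ k : Fin r', (inner ℝ (b (Fin.castLE hr'q k)) x : ℝ) * (b (Fin.castLE hr'q k)) j := by
          rw [Finset.sum_map]
          rfl
  have hHCk : ∀ k : Fin r', (H * C) i k = (inner ℝ (b (Fin.castLE hr'q k)) x : ℝ) := by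
    intro k
    rw [Matrix.mul_apply, PiLp.inner_apply]
    simp only [RCLike.inner_apply, conj_trivial]
    apply Finset.sum_congr rfl
    intro l _
    show H i l * b (Fin.castLE hr'q k) l = H i l * b (Fin.castLE hr'q k) l
    ring_nf
  show (H * C * Cᵀ) i j = H i j
  rw [Matrix.mul_apply]
  calc ∑ k, (H * C) i k * Cᵀ k j
      = ∑ k : Fin r', (inner ℝ (b (Fin.castLE hr'q k)) x : ℝ) * (b (Fin.castLE hr'q k)) j := by
        apply Finset.sum_congr rfl
        intro k _
        rw [hHCk k]
        rfl
  _ = ∑ l : Fin q, (inner ℝ (b l) x : ℝ) * (b l) j := hsum.symm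
  _ = x j := hcoord.symm
  _ = H i j := rfl

lemma frob_transpose {a b : ℕ} (X : Matrix (Fin a) (Fin b) ℝ) : frobNorm Xᵀ = frobNorm X := by
  rw [frobNorm, frobNorm, Finset.sum_comm]
  rfl

lemma frob_sub_comm {a b : ℕ} (X Y : Matrix (Fin a) (Fin b) ℝ) :
    frobNorm (X - Y) = frobNorm (Y - X) := by
  rw [frobNorm_eq_norm, frobNorm_eq_norm]
  have h : matToEuc (X - Y) = matToEuc X - matToEuc Y := rfl
  have h2 : matToEuc (Y - X) = matToEuc Y - matToEuc X := rfl
  rw [h, h2, norm_sub_rev]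

theorem covering_number_bound_aux (K q r : ℕ) (hK : 0 < K) (hq : 0 < q) (hr : 0 < r)
    (H₀ : Matrix (Fin (2 * K)) (Fin q) ℝ) (hrank : H₀.rank ≤ r)
    (A ε : ℝ) (hA : 0 < A) (hε : 0 < ε) :
    ∃ S : Finset (Matrix (Fin (2 * K)) (Fin q) ℝ),
      (S.card : ℝ) ≤ (8 * A / ε + 2) ^ (2 * K * r) *
          (8 * Real.sqrt r * (frobNorm H₀ + A + ε) / ε + 2) ^ (q * r) ∧
      ∀ H : Matrix (Fin (2 * K)) (Fin q) ℝ, H.rank ≤ r → frobNorm (H - H₀) ≤ A →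
        ∃ H' ∈ S, frobNorm (H - H') ≤ ε := by
  classical
  set r' := min r q with hr'
  have hr'q : r' ≤ q := min_le_right r q
  have hr'r : r' ≤ r := min_le_left r q
  set M : ℝ := frobNorm H₀ + A with hM
  have hM0 : 0 < M := by have := frobNorm_nonneg H₀; linarith
  set δC : ℝ := ε / (4 * (M + ε)) with hδC
  have hδC0 : 0 < δC := by positivity
  have hδC14 : δC ≤ 1/4 := by
    rw [hδC, div_le_iff₀ (by positivity)]
    nlinarith
  set δB : ℝ := ε / 2 with hδB
  have hδB0 : 0 < δB := by positivity
  set RC : ℝ := Real.sqrt r' with hRC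
  have hRC0 : 0 ≤ RC := Real.sqrt_nonneg _
  set RB : ℝ := A + frobNorm H₀ * δC with hRB
  have hRB0 : 0 ≤ RB := by
    have := frobNorm_nonneg H₀
    positivity
  obtain ⟨NC, hNCcard, hNCnet⟩ := matrix_net (0 : Matrix (Fin q) (Fin r') ℝ) hRC0 hδC0
  have hNB := fun C₂ : Matrix (Fin q) (Fin r') ℝ =>
    matrix_net (H₀ * C₂) hRB0 hδB0
  choose NB hNBcard hNBnet using hNB
  set S : Finset (Matrix (Fin (2 * K)) (Fin q) ℝ) :=
    NC.biUnion (fun C₂ => (NB C₂).image (fun B₂ => B₂ * C₂ᵀ)) with hS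
  have hbase1 : (1:ℝ) ≤ 8 * A / ε + 2 := by
    have : 0 ≤ 8 * A / ε := by positivity
    linarith
  have hbase2 : (1:ℝ) ≤ 8 * Real.sqrt r * (frobNorm H₀ + A + ε) / ε + 2 := by
    have : 0 ≤ 8 * Real.sqrt r * (frobNorm H₀ + A + ε) / ε := by
      have := frobNorm_nonneg H₀
      have := Real.sqrt_nonneg (r:ℝ)
      positivity
    linarith
  refine ⟨S, ?_, ?_⟩
  · -- cardinality bound
    set KB : ℝ := (2 * RB / δB + 1) ^ (2 * K * r') with hKB
    have hKB0 : 0 ≤ KB := by positivity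
    have h1 : (S.card : ℝ) ≤ (NC.card : ℝ) * KB := by
      have h2 : S.card ≤ ∑ C₂ ∈ NC, ((NB C₂).image (fun B₂ => B₂ * C₂ᵀ)).card :=
        Finset.card_biUnion_le
      calc (S.card : ℝ) ≤ (∑ C₂ ∈ NC, ((NB C₂).image (fun B₂ => B₂ * C₂ᵀ)).card : ℕ) := by
            exact_mod_cast h2
      _ = ∑ C₂ ∈ NC, (((NB C₂).image (fun B₂ => B₂ * C₂ᵀ)).card : ℝ) := by push_cast; ring
      _ ≤ ∑ C₂ ∈ NC, KB := by
            apply Finset.sum_le_sum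
            intro C₂ _
            calc (((NB C₂).image (fun B₂ => B₂ * C₂ᵀ)).card : ℝ)
                ≤ ((NB C₂).card : ℝ) := by exact_mod_cast Finset.card_image_le
            _ ≤ KB := hNBcard C₂
      _ = (NC.card : ℝ) * KB := by rw [Finset.sum_const, nsmul_eq_mul]
    have hKBle : KB ≤ (8 * A / ε + 2) ^ (2 * K * r) := by
      have hb : 2 * RB / δB + 1 ≤ 8 * A / ε + 2 := by
        have hfH0 : frobNorm H₀ ≤ M + ε := by
          have := frobNorm_nonneg H₀; linarith
        have h3 : frobNorm H₀ * δC ≤ ε / 4 := by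
          rw [hδC]
          rw [mul_div_assoc']
          rw [div_le_div_iff₀ (by positivity) (by positivity)]
          nlinarith [frobNorm_nonneg H₀]
        have h4 : 2 * RB / δB = 4 * RB / ε := by
          rw [hδB]; field_simp; ring
        rw [h4]
        have h5 : 4 * RB ≤ 4 * A + ε := by rw [hRB]; nlinarith [h3]
        calc 4 * RB / ε + 1 ≤ (4 * A + ε) / ε + 1 := by
              exact add_le_add_left ((div_le_div_iff_of_pos_right hε).mpr h5) 1
        _ = 4 * A / ε + 2 := by field_simp; ring
        _ ≤ 8 * A / ε + 2 := by
              have h6 := (div_le_div_iff_of_pos_right hε).mpr (show 4 * A ≤ 8 * A by linarith)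
              linarith
      calc KB ≤ (8 * A / ε + 2) ^ (2 * K * r') := by
            apply pow_le_pow_left₀ (by positivity) hb
      _ ≤ (8 * A / ε + 2) ^ (2 * K * r) :=
            pow_le_pow_right₀ hbase1 (Nat.mul_le_mul_left _ hr'r)
    have hNCle : (NC.card : ℝ) ≤ (8 * Real.sqrt r * (frobNorm H₀ + A + ε) / ε + 2) ^ (q * r) := by
      have hb : 2 * RC / δC + 1 ≤ 8 * Real.sqrt r * (frobNorm H₀ + A + ε) / ε + 2 := by
        have hsq : RC ≤ Real.sqrt r := Real.sqrt_le_sqrt (by exact_mod_cast hr'r)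
        have h5 : 2 * RC / δC = 8 * RC * (M + ε) / ε := by
          rw [hδC]; field_simp; ring
        rw [h5]
        have h6 : 8 * RC * (M + ε) / ε ≤ 8 * Real.sqrt r * (M + ε) / ε := by
          apply (div_le_div_iff_of_pos_right hε).mpr
          nlinarith [hM0, hε]
        have h7 : (M + ε) = frobNorm H₀ + A + ε := by rw [hM]
        rw [← h7]
        linarith
      calc (NC.card : ℝ) ≤ (2 * RC / δC + 1) ^ (q * r') := hNCcard
      _ ≤ (8 * Real.sqrt r * (frobNorm H₀ + A + ε) / ε + 2) ^ (q * r') := by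
            apply pow_le_pow_left₀ (by positivity) hb
      _ ≤ _ := pow_le_pow_right₀ hbase2 (Nat.mul_le_mul_left _ hr'r)
    calc (S.card : ℝ) ≤ (NC.card : ℝ) * KB := h1
    _ ≤ (8 * Real.sqrt r * (frobNorm H₀ + A + ε) / ε + 2) ^ (q * r) *
        ((8 * A / ε + 2) ^ (2 * K * r)) := by
          apply mul_le_mul hNCle hKBle hKB0 (by positivity)
    _ = _ := by ring
  · -- covering property
    intro H hHrank hHA
    have hspan : Module.finrank ℝ (Submodule.span ℝ (Set.range H)) ≤ r' := by
      have h1 : Module.finrank ℝ (Submodule.span ℝ (Set.range H)) = Hᵀ.rank := by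
        rw [Matrix.rank, Matrix.range_mulVecLin]; rfl
      rw [h1, Matrix.rank_transpose]
      exact le_min hHrank (Matrix.rank_le_width H)
    obtain ⟨C, hCorth, hfact⟩ := exists_factorization hr'q H hspan
    -- C is in the ball of radius RC around 0
    have hCfrob : frobNorm (C - 0) ≤ RC := by
      rw [sub_zero, frob_orth_cols C hCorth, hRC]
    obtain ⟨C₂, hC₂NC, hC₂⟩ := hNCnet C hCfrob
    set B : Matrix (Fin (2 * K)) (Fin r') ℝ := H * C with hB
    have hfrobH : frobNorm H ≤ M := by
      have h1 : H = H₀ + (H - H₀) := by abel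
      calc frobNorm H = frobNorm (H₀ + (H - H₀)) := by rw [← h1]
      _ ≤ frobNorm H₀ + frobNorm (H - H₀) := frobNorm_triangle _ _
      _ ≤ M := by rw [hM]; linarith
    have hfrobB : frobNorm B ≤ M := by
      calc frobNorm B ≤ 1 * frobNorm H := frob_mul_le H C (opBnd_orth C hCorth) one_pos.le
      _ = frobNorm H := one_mul _
      _ ≤ M := hfrobH
    -- B is in the ball of radius RB around H₀ * C₂
    have hBball : frobNorm (B - H₀ * C₂) ≤ RB := by
      have hid : B - H₀ * C₂ = (H - H₀) * C + H₀ * (C - C₂) := by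
        rw [Matrix.sub_mul, Matrix.mul_sub]
        abel
      rw [hid]
      calc frobNorm ((H - H₀) * C + H₀ * (C - C₂))
          ≤ frobNorm ((H - H₀) * C) + frobNorm (H₀ * (C - C₂)) := frobNorm_triangle _ _
      _ ≤ 1 * frobNorm (H - H₀) + frobNorm (C - C₂) * frobNorm H₀ := by
          apply add_le_add
          · exact frob_mul_le _ _ (opBnd_orth C hCorth) one_pos.le
          · exact frob_mul_le _ _ (opBnd_frob _) (frobNorm_nonneg _)
      _ ≤ RB := by
          rw [one_mul, hRB]
          have h2 : frobNorm (C - C₂) * frobNorm H₀ ≤ δC * frobNorm H₀ :=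
            mul_le_mul_of_nonneg_right hC₂ (frobNorm_nonneg _)
          nlinarith [frobNorm_nonneg H₀]
    obtain ⟨B₂, hB₂NB, hB₂⟩ := hNBnet C₂ B hBball
    refine ⟨B₂ * C₂ᵀ, ?_, ?_⟩
    · rw [hS]
      apply Finset.mem_biUnion.mpr
      exact ⟨C₂, hC₂NC, Finset.mem_image_of_mem _ hB₂NB⟩
    · -- error bound
      have hid2 : H - B₂ * C₂ᵀ = B * (C - C₂)ᵀ + (B - B₂) * C₂ᵀ := by
        rw [← hfact]
        rw [Matrix.transpose_sub, Matrix.mul_sub, Matrix.sub_mul]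
        abel
      rw [hid2]
      have hT1 : frobNorm (B * (C - C₂)ᵀ) ≤ ε / 4 := by
        calc frobNorm (B * (C - C₂)ᵀ)
            ≤ frobNorm (C - C₂)ᵀ * frobNorm B := frob_mul_le _ _ (opBnd_frob _) (frobNorm_nonneg _)
        _ = frobNorm (C - C₂) * frobNorm B := by rw [frob_transpose]
        _ ≤ δC * M := by
            apply mul_le_mul hC₂ hfrobB (frobNorm_nonneg _) hδC0.le
        _ ≤ ε / 4 := by
            rw [hδC]
            rw [div_mul_eq_mul_div, div_le_div_iff₀ (by positivity) (by positivity)]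
            nlinarith
      have hT2 : frobNorm ((B - B₂) * C₂ᵀ) ≤ (1 + δC) * (ε / 2) := by
        have hop : OpBnd C₂ᵀ (1 + frobNorm (C₂ - C)) := by
          have h3 : C₂ᵀ = Cᵀ + (C₂ - C)ᵀ := by
            have h4 : C + (C₂ - C) = C₂ := by abel
            rw [← Matrix.transpose_add, h4]
          rw [h3]
          exact opBnd_add (opBnd_orth_transpose C hCorth) (by
            have := opBnd_frob (C₂ - C)ᵀ
            rwa [frob_transpose] at this)
        have h4 : frobNorm (C₂ - C) ≤ δC := by rwa [frob_sub_comm]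
        calc frobNorm ((B - B₂) * C₂ᵀ)
            ≤ (1 + frobNorm (C₂ - C)) * frobNorm (B - B₂) := by
              apply frob_mul_le _ _ hop
              have := frobNorm_nonneg (C₂ - C); linarith
        _ ≤ (1 + δC) * (ε / 2) := by
              apply mul_le_mul (by linarith) (by rw [← hδB]; exact hB₂) (frobNorm_nonneg _)
                (by linarith)
      calc frobNorm (B * (C - C₂)ᵀ + (B - B₂) * C₂ᵀ)
          ≤ frobNorm (B * (C - C₂)ᵀ) + frobNorm ((B - B₂) * C₂ᵀ) := frobNorm_triangle _ _
      _ ≤ ε / 4 + (1 + δC) * (ε / 2) := add_le_add hT1 hT2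
      _ ≤ ε := by nlinarith

end CoveringAux

/-- Lemma B.3: explicit ε-net bound for
`{H : rank H ≤ r, ‖H − H₀‖ ≤ A}` in `ℝ^{2K×q}`. -/
theorem covering_number_bound (K q r : ℕ) (hK : 0 < K) (hq : 0 < q) (hr : 0 < r)
    (H₀ : Matrix (Fin (2 * K)) (Fin q) ℝ) (hrank : H₀.rank ≤ r)
    (A ε : ℝ) (hA : 0 < A) (hε : 0 < ε) :
    ∃ S : Finset (Matrix (Fin (2 * K)) (Fin q) ℝ),
      (S.card : ℝ) ≤ (8 * A / ε + 2) ^ (2 * K * r) *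
          (8 * Real.sqrt r * (frobNorm H₀ + A + ε) / ε + 2) ^ (q * r) ∧
      ∀ H : Matrix (Fin (2 * K)) (Fin q) ℝ, H.rank ≤ r → frobNorm (H - H₀) ≤ A →
        ∃ H' ∈ S, frobNorm (H - H') ≤ ε := by
  exact covering_number_bound_aux K q r hK hq hr H₀ hrank A ε hA hε
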